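/- Let f : ℝⁿ → ℝ be μ-strongly convex and L-smooth with 0 < μ ≤ L, let x* be its minimizer, and let x ∈ ℝⁿ. Then the gradient-descent step with step size η = 1/L satisfies ‖x - (1/L)∇f(x) - x*‖ ≤ (1 - μ/(μ+L))·‖x - x*‖. -/

import Mathlib

open scoped RealInnerProductSpace

section Aux

variable {E : Type*} [NormedAddCommGroup E] [InnerProductSpace ℝ E] [CompleteSpace E]

theorem my_descent (f : E → ℝ) (g : E → E) (L : ℝ)
    (hgrad : ∀ x, HasGradientAt f (g x) x)
    (hsm : ∀ x y, ‖g x - g y‖ ≤ L * ‖x - y‖) (x y : E) :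
    f y ≤ f x + ⟪g x, y - x⟫ + L / 2 * ‖y - x‖ ^ 2 := by
  set v := y - x with hv
  set ψ : ℝ → ℝ := fun t => f (x + t • v) - t * ⟪g x, v⟫ - t ^ 2 * (L / 2 * ‖v‖ ^ 2) with hψdef
  have hc : ∀ t : ℝ, HasDerivAt (fun s : ℝ => x + s • v) v t := by
    intro t
    simpa using ((hasDerivAt_id t).smul_const v).const_add x
  have hψ : ∀ t : ℝ, HasDerivAt ψ
      (⟪g (x + t • v), v⟫ - ⟪g x, v⟫ - 2 * t * (L / 2 * ‖v‖ ^ 2)) t := by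
    intro t
    have h1 : HasDerivAt (fun s : ℝ => f (x + s • v)) (⟪g (x + t • v), v⟫) t := by
      have := ((hgrad (x + t • v)).hasFDerivAt).comp_hasDerivAt t (hc t)
      simp at this; exact this
    have h2 : HasDerivAt (fun s : ℝ => s * ⟪g x, v⟫) (⟪g x, v⟫) t := by
      simpa using (hasDerivAt_id t).mul_const (⟪g x, v⟫)
    have h3 : HasDerivAt (fun s : ℝ => s ^ 2 * (L / 2 * ‖v‖ ^ 2))
        (2 * t * (L / 2 * ‖v‖ ^ 2)) t := by
      simpa using (hasDerivAt_pow 2 t).mul_const (L / 2 * ‖v‖ ^ 2)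
    exact (h1.sub h2).sub h3
  have hanti : AntitoneOn ψ (Set.Icc (0:ℝ) 1) := by
    apply antitoneOn_of_deriv_nonpos (convex_Icc (0:ℝ) 1)
    · exact Continuous.continuousOn (by
        have : Differentiable ℝ ψ := fun t => (hψ t).differentiableAt
        exact this.continuous)
    · intro t ht
      exact ((hψ t).differentiableAt).differentiableWithinAt
    · intro t ht
      rw [interior_Icc] at ht
      rw [(hψ t).deriv]
      have hb : ⟪g (x + t • v) - g x, v⟫ ≤ L * t * ‖v‖ ^ 2 := by
        calc ⟪g (x + t • v) - g x, v⟫ ≤ ‖g (x + t • v) - g x‖ * ‖v‖ := real_inner_le_norm _ _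
          _ ≤ (L * ‖(x + t • v) - x‖) * ‖v‖ := by
              gcongr; exact hsm _ _
          _ = L * (|t| * ‖v‖) * ‖v‖ := by rw [add_sub_cancel_left, norm_smul, Real.norm_eq_abs]
          _ = L * t * ‖v‖ ^ 2 := by rw [abs_of_pos ht.1]; ring
      have := inner_sub_left (𝕜 := ℝ) (g (x + t • v)) (g x) v
      rw [this] at hb
      nlinarith
  have h01 := hanti (Set.mem_Icc.2 ⟨le_refl 0, zero_le_one⟩) (Set.mem_Icc.2 ⟨zero_le_one, le_refl 1⟩) zero_le_one
  simp only [hψdef] at h01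
  simp only [zero_smul, add_zero, one_smul, zero_mul, sub_zero, one_pow, one_mul] at h01
  have hxy : x + v = y := by rw [hv]; abel
  rw [hxy] at h01
  linarith

theorem my_coco (h : E → ℝ) (gh : E → E) (C : ℝ) (hC : 0 < C)
    (hconv : ∀ a b, h a + ⟪gh a, b - a⟫ ≤ h b)
    (hdesc : ∀ a b, h b ≤ h a + ⟪gh a, b - a⟫ + C / 2 * ‖b - a‖ ^ 2)
    (a b : E) : (1 / C) * ‖gh a - gh b‖ ^ 2 ≤ ⟪gh a - gh b, a - b⟫ := by
  have key : ∀ p q : E, h p + ⟪gh p, q - p⟫ + 1 / (2 * C) * ‖gh q - gh p‖ ^ 2 ≤ h q := by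
    intro p q
    set u := gh q - gh p with hu
    have h1 := hconv p (q - C⁻¹ • u)
    have h2 := hdesc q (q - C⁻¹ • u)
    have e1 : (q - C⁻¹ • u) - p = (q - p) - C⁻¹ • u := by abel
    have e2 : (q - C⁻¹ • u) - q = -(C⁻¹ • u) := by abel
    rw [e1, inner_sub_right, inner_smul_right] at h1
    rw [e2, inner_neg_right, inner_smul_right, norm_neg, norm_smul, Real.norm_eq_abs,
      abs_of_pos (inv_pos.2 hC)] at h2
    have hC' : C ≠ 0 := ne_of_gt hC
    have e3 : C⁻¹ * ⟪gh q, u⟫ - C⁻¹ * ⟪gh p, u⟫ = C⁻¹ * ‖u‖ ^ 2 := by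
      rw [← mul_sub, ← inner_sub_left, ← hu, real_inner_self_eq_norm_sq]
    have e4 : C / 2 * (C⁻¹ * ‖u‖) ^ 2 = 1 / (2 * C) * ‖u‖ ^ 2 := by
      field_simp
    have e5 : 1 / (2 * C) * ‖u‖ ^ 2 + 1 / (2 * C) * ‖u‖ ^ 2 = C⁻¹ * ‖u‖ ^ 2 := by
      field_simp; ring
    rw [e4] at h2
    linarith
  have k1 := key a b
  have k2 := key b a
  have e4 : ⟪gh b, a - b⟫ = -⟪gh b, b - a⟫ := by rw [← inner_neg_right]; congr 1; abel
  have e5 : ‖gh a - gh b‖ = ‖gh b - gh a‖ := by rw [← norm_neg]; congr 1; abel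
  have e6 : ⟪gh a - gh b, a - b⟫ = ⟪gh a, a - b⟫ - ⟪gh b, a - b⟫ := inner_sub_left _ _ _
  have e7 : ⟪gh a, b - a⟫ = -⟪gh a, a - b⟫ := by rw [← inner_neg_right]; congr 1; abel
  rw [e5] at k2
  rw [e7] at k1
  have e8 : 1 / (2*C) * ‖gh b - gh a‖^2 + 1 / (2*C) * ‖gh b - gh a‖^2
      = 1/C * ‖gh b - gh a‖^2 := by field_simp; ring
  rw [e6, e4, e5]
  linarith

end Aux

/-- For `μ`-strongly convex, `L`-smooth `f` with `0 < μ ≤ L` and minimizer `x*`,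
the gradient step with step size `1/L` contracts:
`‖x - (1/L)∇f(x) - x*‖ ≤ (1 - μ/(μ+L))‖x - x*‖`. -/
theorem gradient_step_contraction
    {n : ℕ} (f : EuclideanSpace ℝ (Fin n) → ℝ)
    (g : EuclideanSpace ℝ (Fin n) → EuclideanSpace ℝ (Fin n))
    (μ L : ℝ) (hμ : 0 < μ) (hμL : μ ≤ L)
    (hgrad : ∀ x, HasGradientAt f (g x) x)
    (hsc : ∀ x y, f y ≥ f x + ⟪g x, y - x⟫ + μ / 2 * ‖y - x‖ ^ 2)
    (hsm : ∀ x y, ‖g x - g y‖ ≤ L * ‖x - y‖)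
    (xstar : EuclideanSpace ℝ (Fin n)) (hgrad0 : g xstar = 0)
    (x : EuclideanSpace ℝ (Fin n)) :
    ‖x - (1 / L) • g x - xstar‖ ≤ (1 - μ / (μ + L)) * ‖x - xstar‖ := by
  have hL : 0 < L := lt_of_lt_of_le hμ hμL
  have hML : 0 < μ + L := by linarith
  set d := x - xstar with hd
  have hmono : μ * ‖d‖ ^ 2 ≤ ⟪g x, d⟫ := by
    have h1 := hsc x xstar
    have h2 := hsc xstar x
    rw [hgrad0, inner_zero_left] at h2
    have e1 : ⟪g x, xstar - x⟫ = -⟪g x, d⟫ := by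
      rw [← inner_neg_right]; congr 1; rw [hd]; abel
    have e2 : ‖xstar - x‖ = ‖d‖ := by rw [hd, norm_sub_rev]
    rw [e1, e2] at h1
    linarith
  have hlip : ‖g x‖ ≤ L * ‖d‖ := by
    have := hsm x xstar
    rwa [hgrad0, sub_zero] at this
  have hcoer : ‖g x‖ ^ 2 + μ * L * ‖d‖ ^ 2 ≤ (μ + L) * ⟪g x, d⟫ := by
    rcases eq_or_lt_of_le hμL with hEq | hlt
    · subst hEq
      have h1 : ‖g x‖ * ‖g x‖ ≤ (μ * ‖d‖) * (μ * ‖d‖) :=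
        mul_le_mul hlip hlip (norm_nonneg _) (by positivity)
      nlinarith
    · set h : EuclideanSpace ℝ (Fin n) → ℝ := fun z => f z - μ / 2 * ‖z‖ ^ 2 with hh
      set gh : EuclideanSpace ℝ (Fin n) → EuclideanSpace ℝ (Fin n) :=
        fun z => g z - μ • z with hgh
      have hkey : ∀ a b : EuclideanSpace ℝ (Fin n),
          ⟪gh a, b - a⟫ = ⟪g a, b - a⟫ + μ / 2 * ‖b - a‖ ^ 2
            - (μ / 2 * ‖b‖ ^ 2 - μ / 2 * ‖a‖ ^ 2) := by
        intro a b
        have en : ‖b - a‖ ^ 2 = ‖b‖ ^ 2 - 2 * ⟪b, a⟫ + ‖a‖ ^ 2 := by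
          rw [← real_inner_self_eq_norm_sq, inner_sub_sub_self,
            real_inner_self_eq_norm_sq, real_inner_self_eq_norm_sq, real_inner_comm a b]
          ring
        have ei : ⟪a, b - a⟫ = ⟪b, a⟫ - ‖a‖ ^ 2 := by
          rw [inner_sub_right, real_inner_self_eq_norm_sq, real_inner_comm]
        rw [hgh]
        simp only [inner_sub_left, inner_smul_left, conj_trivial]
        rw [ei, en]
        ring
      have hconv : ∀ a b, h a + ⟪gh a, b - a⟫ ≤ h b := by
        intro a b
        have := hsc a b
        rw [hkey a b, hh]
        simp only
        linarith
      have hdesc : ∀ a b, h b ≤ h a + ⟪gh a, b - a⟫ + (L - μ) / 2 * ‖b - a‖ ^ 2 := by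
        intro a b
        have := my_descent f g L hgrad hsm a b
        rw [hkey a b, hh]
        simp only
        linarith
      have hcc := my_coco h gh (L - μ) (by linarith) hconv hdesc x xstar
      have eg : gh x - gh xstar = g x - μ • d := by
        rw [hgh]; simp only [hgrad0]; rw [hd]; module
      rw [eg] at hcc
      have en2 : ‖g x - μ • d‖ ^ 2 = ‖g x‖ ^ 2 - 2 * μ * ⟪g x, d⟫ + μ ^ 2 * ‖d‖ ^ 2 := by
        rw [norm_sub_sq_real, inner_smul_right, norm_smul, Real.norm_eq_abs,
          abs_of_pos hμ, mul_pow]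
        ring
      have ei2 : ⟪g x - μ • d, x - xstar⟫ = ⟪g x, d⟫ - μ * ‖d‖ ^ 2 := by
        rw [← hd, inner_sub_left, inner_smul_left, conj_trivial, real_inner_self_eq_norm_sq]
      rw [en2, ei2] at hcc
      have hLm : 0 < L - μ := by linarith
      have hc3 : ‖g x‖ ^ 2 - 2 * μ * ⟪g x, d⟫ + μ ^ 2 * ‖d‖ ^ 2
          ≤ (L - μ) * (⟪g x, d⟫ - μ * ‖d‖ ^ 2) := by
        have := mul_le_mul_of_nonneg_left hcc (le_of_lt hLm)
        rw [← mul_assoc, mul_one_div, div_self (ne_of_gt hLm), one_mul] at this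
        linarith
      nlinarith
  have hsq : ‖d - (1 / L) • g x‖ ^ 2 ≤ ((1 - μ / (μ + L)) * ‖d‖) ^ 2 := by
    have en3 : ‖d - (1 / L) • g x‖ ^ 2
        = ‖d‖ ^ 2 - 2 * (1 / L) * ⟪g x, d⟫ + (1 / L) ^ 2 * ‖g x‖ ^ 2 := by
      rw [norm_sub_sq_real, inner_smul_right, real_inner_comm d (g x), norm_smul,
        Real.norm_eq_abs, abs_of_pos (by positivity : (0:ℝ) < 1 / L), mul_pow]
      ring
    have e9 : 1 - μ / (μ + L) = L / (μ + L) := by field_simp; ring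
    rw [en3, e9]
    have hL2 : (0:ℝ) < L ^ 2 * (μ + L) ^ 2 := by positivity
    have main : (‖d‖ ^ 2 - 2 * (1 / L) * ⟪g x, d⟫ + (1 / L) ^ 2 * ‖g x‖ ^ 2)
        * (L ^ 2 * (μ + L) ^ 2) ≤ (L / (μ + L) * ‖d‖) ^ 2 * (L ^ 2 * (μ + L) ^ 2) := by
      have e : (‖d‖ ^ 2 - 2 * (1 / L) * ⟪g x, d⟫ + (1 / L) ^ 2 * ‖g x‖ ^ 2)
          * (L ^ 2 * (μ + L) ^ 2)
          = ‖d‖ ^ 2 * L ^ 2 * (μ + L) ^ 2 - 2 * L * (μ + L) ^ 2 * ⟪g x, d⟫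
            + (μ + L) ^ 2 * ‖g x‖ ^ 2 := by
        field_simp
      have e' : (L / (μ + L) * ‖d‖) ^ 2 * (L ^ 2 * (μ + L) ^ 2) = L ^ 4 * ‖d‖ ^ 2 := by
        field_simp
      rw [e, e']
      nlinarith [mul_le_mul_of_nonneg_left hcoer (by positivity : (0:ℝ) ≤ 2 * L * (μ + L)),
        mul_nonneg (mul_nonneg (sq_nonneg ‖g x‖) (le_of_lt hML)) (sub_nonneg.2 hμL),
        mul_nonneg (mul_nonneg (sq_nonneg ‖d‖) (sq_nonneg μ)) (sq_nonneg L)]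
    exact le_of_mul_le_mul_right main hL2
  have hc0 : 0 ≤ (1 - μ / (μ + L)) * ‖d‖ := by
    apply mul_nonneg _ (norm_nonneg _)
    rw [sub_nonneg]
    exact div_le_one_of_le₀ (by linarith) (le_of_lt hML)
  have heq : x - (1 / L) • g x - xstar = d - (1 / L) • g x := by rw [hd]; abel
  rw [heq]
  have hs := Real.sqrt_le_sqrt hsq
  rwa [Real.sqrt_sq (norm_nonneg _), Real.sqrt_sq hc0] at hs
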